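/- Let f₁,…,f_s : ℝ^d → ℝ be differentiable and convex, with each f_j being L_j-smooth (L_j > 0), let f = (1/s)·Σⱼ₌₁ˢ f_j and L̄ = (1/s)·Σⱼ₌₁ˢ L_j. Assume f is μ-strongly convex and L-smooth with 0 < μ ≤ L, and let x* be a minimizer of f. Let K ≥ 1, set L̃ = max{L, L̄/K}, σ = μ/L̃, let θ₁, θ₂ ∈ (0,1) with θ₁ + θ₂ ≤ 1, p ∈ (0,1], and η = θ₂/((1 + θ₂)·θ₁). Fix z, w, y ∈ ℝ^d and set x = θ₁·z + θ₂·w + (1 − θ₁ − θ₂)·y. Let J₁,…,J_K be i.i.d. random indices in Fin s with P(J = j) = L_j/(s·L̄), let g = (1/K)·Σₘ₌₁ᴷ (L̄/L_{Jₘ})·(∇f_{Jₘ}(x) − ∇f_{Jₘ}(w)) + ∇f(w), and let B be a Bernoulli random variable with P(B = 1) = p independent of (J₁,…,J_K). Define z⁺ = (1/(1 + ησ))·(ησ·x + z − (η/L̃)·g), y⁺ = x + θ₁·(z⁺ − z), w⁺ = y if B = 1 and w⁺ = w otherwise, and Z(v) = (L̃(1 + ησ)/(2η))·‖v − x*‖²,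 Y(v) = (1/θ₁)·(f(v) − f(x*)), W(v) = (θ₂(1 + θ₁)/(pθ₁))·(f(v) − f(x*)). Then E[Z(z⁺) + Y(y⁺) + W(w⁺)] ≤ (1/(1 + ησ))·Z(z) + (1 − θ₁(1 − θ₂))·Y(y) + (1 − pθ₁/(1 + θ₁))·W(w). -/

import Mathlib

open MeasureTheory ProbabilityTheory
open scoped RealInnerProductSpace ENNReal

section helpers
variable {E : Type*} [NormedAddCommGroup E] [InnerProductSpace ℝ E]

lemma young_step (c1 c2 : ℝ) (h1 : 0 ≤ c1) (h2 : 0 ≤ c2) (u v : E) :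
    2 * c1 * c2 * ⟪u, v⟫ ≤ c2 ^ 2 * ‖u‖ ^ 2 + c1 ^ 2 * ‖v‖ ^ 2 := by
  have h := real_inner_le_norm u v
  nlinarith [sq_nonneg (c2 * ‖u‖ - c1 * ‖v‖), mul_nonneg h1 h2, norm_nonneg u, norm_nonneg v]

lemma law_of_cos (a b c : E) :
    2 * ⟪a - b, a - c⟫ = ‖a - b‖ ^ 2 + ‖a - c‖ ^ 2 - ‖b - c‖ ^ 2 := by
  have h := norm_sub_sq_real (a - b) (a - c)
  have e : (a - b) - (a - c) = -(b - c) := by abel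
  rw [e, norm_neg] at h
  linarith

lemma mirror_step (c a b : ℝ) (gg zp z x u : E)
    (h : c • gg + a • (zp - z) + b • (zp - x) = 0) :
    2 * c * ⟪gg, zp - u⟫ = a * (‖z - u‖ ^ 2 - ‖zp - z‖ ^ 2 - ‖zp - u‖ ^ 2)
      + b * (‖x - u‖ ^ 2 - ‖zp - x‖ ^ 2 - ‖zp - u‖ ^ 2) := by
  have hgg : c • gg = -(a • (zp - z)) - b • (zp - x) := by
    rw [add_assoc] at h
    exact (eq_neg_of_add_eq_zero_left h).trans (by abel)
  have hin : c * ⟪gg, zp - u⟫ = -(a * ⟪zp - z, zp - u⟫) - b * ⟪zp - x, zp - u⟫ := by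
    rw [← real_inner_smul_left, hgg]
    simp [inner_sub_left, inner_neg_left, real_inner_smul_left]
  have l1 := law_of_cos zp z u
  have l2 := law_of_cos zp x u
  linear_combination 2 * hin - a * l1 - b * l2

lemma katyusha_pointwise
    {θ₁ θ₂ μ Lt : ℝ}
    (ht1 : 0 < θ₁) (ht2 : 0 < θ₂) (hθ : θ₁ + θ₂ ≤ 1)
    (hμ : 0 < μ) (hLt : 0 < Lt)
    (x z y w xstar zp G gg : E)
    (hx : x = θ₁ • z + θ₂ • w + (1 - θ₁ - θ₂) • y)
    (hK1 : θ₂ • gg + (Lt * (1 + θ₂) * θ₁) • (zp - z) + (θ₂ * μ) • (zp - x) = 0)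
    (Fx Fy Fw Fs Fyp : ℝ)
    (h2 : Fyp ≤ Fx + θ₁ * ⟪G, zp - z⟫ + Lt * θ₁ ^ 2 / 2 * ‖zp - z‖ ^ 2)
    (h5 : Fx + ⟪G, xstar - x⟫ + μ / 2 * ‖xstar - x‖ ^ 2 ≤ Fs)
    (h6 : Fx + ⟪G, y - x⟫ ≤ Fy) :
    θ₁ * Lt * (Lt * (1 + θ₂) * θ₁ + μ * θ₂) * ‖zp - xstar‖ ^ 2
        + 2 * θ₂ * Lt * (Fyp - Fs)
      ≤ Lt ^ 2 * (1 + θ₂) * θ₁ ^ 2 * ‖z - xstar‖ ^ 2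
        + 2 * θ₂ * Lt * (1 - θ₁ - θ₂) * (Fy - Fs) + 2 * θ₂ ^ 2 * Lt * (Fw - Fs)
        - 2 * θ₂ ^ 2 * Lt * (Fw - Fx - ⟪G, w - x⟫)
        - 2 * θ₁ * θ₂ * Lt * ⟪gg - G, z - xstar⟫ + θ₂ ^ 2 * ‖G - gg‖ ^ 2 := by
  have hθ' : (0:ℝ) ≤ 1 - θ₁ - θ₂ := by linarith
  have S1 : 2 * θ₂ * Lt * Fyp
      ≤ 2 * θ₂ * Lt * (Fx + θ₁ * ⟪G, zp - z⟫ + Lt * θ₁ ^ 2 / 2 * ‖zp - z‖ ^ 2) :=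
    mul_le_mul_of_nonneg_left h2 (by positivity)
  have S2 : 2 * (Lt * θ₁) * θ₂ * ⟪G - gg, zp - z⟫
      ≤ θ₂ ^ 2 * ‖G - gg‖ ^ 2 + (Lt * θ₁) ^ 2 * ‖zp - z‖ ^ 2 :=
    young_step (Lt * θ₁) θ₂ (by positivity) ht2.le (G - gg) (zp - z)
  have S3 := mirror_step θ₂ (Lt * (1 + θ₂) * θ₁) (θ₂ * μ) gg zp z x xstar hK1
  have S3s : θ₁ * Lt * (2 * θ₂ * ⟪gg, zp - xstar⟫)
      = θ₁ * Lt * ((Lt * (1 + θ₂) * θ₁) * (‖z - xstar‖ ^ 2 - ‖zp - z‖ ^ 2 - ‖zp - xstar‖ ^ 2)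
        + (θ₂ * μ) * (‖x - xstar‖ ^ 2 - ‖zp - x‖ ^ 2 - ‖zp - xstar‖ ^ 2)) := by rw [S3]
  have S4 : 2 * θ₁ * θ₂ * Lt * (Fx + ⟪G, xstar - x⟫ + μ / 2 * ‖xstar - x‖ ^ 2)
      ≤ 2 * θ₁ * θ₂ * Lt * Fs := mul_le_mul_of_nonneg_left h5 (by positivity)
  have S5 : 2 * θ₂ * Lt * (1 - θ₁ - θ₂) * (Fx + ⟪G, y - x⟫)
      ≤ 2 * θ₂ * Lt * (1 - θ₁ - θ₂) * Fy := mul_le_mul_of_nonneg_left h6 (by positivity)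
  have hg7 : θ₁ * ⟪G, z - xstar⟫ + θ₂ * ⟪G, w - xstar⟫ + (1 - θ₁ - θ₂) * ⟪G, y - xstar⟫
      = ⟪G, x - xstar⟫ := by
    rw [hx]
    simp only [inner_sub_right, inner_add_right, real_inner_smul_right]
    ring
  have S6 : 2 * θ₂ * Lt * (θ₁ * ⟪G, z - xstar⟫ + θ₂ * ⟪G, w - xstar⟫
      + (1 - θ₁ - θ₂) * ⟪G, y - xstar⟫) = 2 * θ₂ * Lt * ⟪G, x - xstar⟫ := by rw [hg7]
  have hd4 : ⟪G, w - xstar⟫ = ⟪G, w - x⟫ + ⟪G, x - xstar⟫ := by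
    simp only [inner_sub_right]; ring
  have S7 : 2 * θ₂ ^ 2 * Lt * ⟪G, w - xstar⟫
      = 2 * θ₂ ^ 2 * Lt * (⟪G, w - x⟫ + ⟪G, x - xstar⟫) := by rw [hd4]
  have hd5 : ⟪G, y - xstar⟫ = ⟪G, y - x⟫ + ⟪G, x - xstar⟫ := by
    simp only [inner_sub_right]; ring
  have S8 : 2 * θ₂ * Lt * (1 - θ₁ - θ₂) * ⟪G, y - xstar⟫
      = 2 * θ₂ * Lt * (1 - θ₁ - θ₂) * (⟪G, y - x⟫ + ⟪G, x - xstar⟫) := by rw [hd5]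
  have hd6 : ⟪G, xstar - x⟫ = -⟪G, x - xstar⟫ := by
    simp only [inner_sub_right]; ring
  have S9 : 2 * θ₁ * θ₂ * Lt * ⟪G, xstar - x⟫
      = 2 * θ₁ * θ₂ * Lt * (-⟪G, x - xstar⟫) := by rw [hd6]
  have hdC : ⟪gg, zp - z⟫ = ⟪gg, zp - xstar⟫ - ⟪gg, z - xstar⟫ := by
    simp only [inner_sub_right]; ring
  have S10 : 2 * θ₁ * θ₂ * Lt * ⟪gg, zp - z⟫
      = 2 * θ₁ * θ₂ * Lt * (⟪gg, zp - xstar⟫ - ⟪gg, z - xstar⟫) := by rw [hdC]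
  have hd2 : ⟪G - gg, zp - z⟫ = ⟪G, zp - z⟫ - ⟪gg, zp - z⟫ := by
    simp only [inner_sub_left]
  have S11 : 2 * θ₁ * θ₂ * Lt * ⟪G - gg, zp - z⟫
      = 2 * θ₁ * θ₂ * Lt * (⟪G, zp - z⟫ - ⟪gg, zp - z⟫) := by rw [hd2]
  have hd3 : ⟪gg - G, z - xstar⟫ = ⟪gg, z - xstar⟫ - ⟪G, z - xstar⟫ := by
    simp only [inner_sub_left]
  have S12 : 2 * θ₁ * θ₂ * Lt * ⟪gg - G, z - xstar⟫
      = 2 * θ₁ * θ₂ * Lt * (⟪gg, z - xstar⟫ - ⟪G, z - xstar⟫) := by rw [hd3]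
  have nrx : ‖xstar - x‖ ^ 2 = ‖x - xstar‖ ^ 2 := by rw [norm_sub_rev]
  have S13 : θ₁ * θ₂ * Lt * μ * ‖xstar - x‖ ^ 2
      = θ₁ * θ₂ * Lt * μ * ‖x - xstar‖ ^ 2 := by rw [nrx]
  have S14 : 0 ≤ θ₁ * θ₂ * Lt * μ * ‖zp - x‖ ^ 2 := by positivity
  linarith [S1, S2, S3s, S4, S5, S6, S7, S8, S9, S10, S11, S12, S13, S14]

lemma convex_grad_ineq [CompleteSpace E] {f : E → ℝ} (hconv : ConvexOn ℝ Set.univ f)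
    (hdiff : Differentiable ℝ f) (u v : E) :
    f u + ⟪gradient f u, v - u⟫ ≤ f v := by
  have hfd : HasFDerivAt f (InnerProductSpace.toDual ℝ E (gradient f u)) u :=
    hasGradientAt_iff_hasFDerivAt.mp (hdiff u).hasGradientAt
  have hline : ∀ t : ℝ, HasDerivAt (fun t : ℝ => u + t • (v - u)) (v - u) t := by
    intro t
    simpa using ((hasDerivAt_id t).smul_const (v - u)).const_add u
  have hder : HasDerivAt (fun t : ℝ => f (u + t • (v - u))) ⟪gradient f u, v - u⟫ 0 := by
    have hfd' : HasFDerivAt f (InnerProductSpace.toDual ℝ E (gradient f u))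
        ((fun t : ℝ => u + t • (v - u)) 0) := by simpa using hfd
    have := hfd'.comp_hasDerivAt (0 : ℝ) (hline 0)
    simpa [InnerProductSpace.toDual_apply_apply, Function.comp_def] using this
  have hslope : ∀ t : ℝ, t ∈ Set.Ioc (0:ℝ) 1 →
      (f (u + t • (v - u)) - f u) / t ≤ f v - f u := by
    intro t ht
    have hcomb := hconv.2 (Set.mem_univ u) (Set.mem_univ v)
      (by linarith [ht.1, ht.2] : (0:ℝ) ≤ 1 - t) (le_of_lt ht.1) (by ring)
    have heq : (1 - t) • u + t • v = u + t • (v - u) := by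
      simp [smul_sub, sub_smul]; abel
    rw [heq] at hcomb
    rw [div_le_iff₀ ht.1]
    simp only [smul_eq_mul] at hcomb
    nlinarith [hcomb]
  have htend : Filter.Tendsto (fun t : ℝ => (f (u + t • (v - u)) - f u) / t)
      (nhdsWithin 0 (Set.Ioi 0)) (nhds ⟪gradient f u, v - u⟫) := by
    have h1 := hasDerivAt_iff_tendsto_slope.mp hder
    have h2 : Filter.Tendsto (slope (fun t : ℝ => f (u + t • (v - u))) 0)
        (nhdsWithin 0 (Set.Ioi 0)) (nhds ⟪gradient f u, v - u⟫) :=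
      h1.mono_left (nhdsWithin_mono 0 (fun t ht => ne_of_gt ht))
    refine h2.congr' ?_
    filter_upwards [self_mem_nhdsWithin] with t ht
    simp [slope, (show (0:ℝ) < t from ht).ne', div_eq_inv_mul]
  have : ⟪gradient f u, v - u⟫ ≤ f v - f u := by
    refine le_of_tendsto htend ?_
    filter_upwards [Ioc_mem_nhdsGT_of_mem (by simp : (0:ℝ) ∈ Set.Ico (0:ℝ) 1)] with t ht
    exact hslope t ht
  linarith

lemma cocoercive [CompleteSpace E] {f : E → ℝ} (hconv : ConvexOn ℝ Set.univ f)
    (hdiff : Differentiable ℝ f) {Lc : ℝ} (hL : 0 < Lc)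
    (hsm : ∀ u v : E, f v ≤ f u + ⟪gradient f u, v - u⟫ + Lc / 2 * ‖v - u‖ ^ 2) (x w : E) :
    ‖gradient f x - gradient f w‖ ^ 2
      ≤ 2 * Lc * (f w - f x - ⟪gradient f x, w - x⟫) := by
  set d := gradient f w - gradient f x with hd
  set u := w - Lc⁻¹ • d with hu
  have h1 := convex_grad_ineq hconv hdiff x u
  have h2 := hsm w u
  have e1 : u - w = -(Lc⁻¹ • d) := by rw [hu]; abel
  have e2 : u - x = (w - x) - Lc⁻¹ • d := by rw [hu]; abel
  rw [e1] at h2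
  rw [e2] at h1
  rw [inner_sub_right] at h1
  rw [inner_neg_right, norm_neg, real_inner_smul_right, norm_smul] at h2
  rw [real_inner_smul_right] at h1
  have hdd : ⟪gradient f w, d⟫ - ⟪gradient f x, d⟫ = ‖d‖ ^ 2 := by
    rw [← inner_sub_left, ← hd, real_inner_self_eq_norm_sq]
  have hnn : ‖Lc⁻¹‖ = Lc⁻¹ := by
    rw [Real.norm_eq_abs, abs_of_pos (by positivity)]
  rw [hnn] at h2
  have hrev : ‖gradient f x - gradient f w‖ = ‖d‖ := by rw [hd, norm_sub_rev]
  rw [hrev]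
  have hLc : Lc ≠ 0 := ne_of_gt hL
  have key : Lc⁻¹ * ‖d‖ ^ 2 - Lc / 2 * (Lc⁻¹ * ‖d‖) ^ 2
      ≤ f w - f x - ⟪gradient f x, w - x⟫ := by
    have hdd' := congrArg (fun r => Lc⁻¹ * r) hdd
    simp only [mul_sub] at hdd'
    linarith [h1, h2, hdd']
  have heq : Lc⁻¹ * ‖d‖ ^ 2 - Lc / 2 * (Lc⁻¹ * ‖d‖) ^ 2 = ‖d‖ ^ 2 / (2 * Lc) := by
    field_simp; ring
  rw [heq, div_le_iff₀ (by positivity)] at key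
  linarith [key]
end helpers

lemma integrable_comp_fin {Ω : Type*} [MeasureSpace Ω] [IsProbabilityMeasure (ℙ : Measure Ω)]
    {S : Type*} [Fintype S] [MeasurableSpace S] [MeasurableSingletonClass S]
    {E : Type*} [NormedAddCommGroup E] [NormedSpace ℝ E]
    (T : Ω → S) (hT : Measurable T) (ψ : S → E) :
    Integrable (fun ω => ψ (T ω)) ℙ := by
  have hψ : StronglyMeasurable ψ := StronglyMeasurable.of_discrete
  have h1 : Integrable ψ (Measure.map T ℙ) := Integrable.of_finite
  exact (integrable_map_measure hψ.aestronglyMeasurable hT.aemeasurable).mp h1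

lemma integral_comp_fin {Ω : Type*} [MeasureSpace Ω] [IsProbabilityMeasure (ℙ : Measure Ω)]
    {S : Type*} [Fintype S] [MeasurableSpace S] [MeasurableSingletonClass S]
    {E : Type*} [NormedAddCommGroup E] [NormedSpace ℝ E] [CompleteSpace E]
    (T : Ω → S) (hT : Measurable T) (ψ : S → E) :
    ∫ ω, ψ (T ω) ∂ℙ = ∑ v, (ℙ (T ⁻¹' {v})).toReal • ψ v := by
  have hψ : StronglyMeasurable ψ := StronglyMeasurable.of_discrete
  rw [← integral_map hT.aemeasurable hψ.aestronglyMeasurable,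
    integral_fintype _]
  congr 1
  ext v
  rw [measureReal_def, Measure.map_apply hT (measurableSet_singleton v)]
  exact Integrable.of_finite

set_option maxHeartbeats 2000000 in
/-- **One-iteration Lyapunov contraction of the DVPL-Katyusha algorithm** (vertical
federated regime): let `f₁, …, f_s : ℝ^d → ℝ` be differentiable and convex with `f_j` being
`L_j`-smooth, `f = (1/s)·∑ⱼ f_j`, `L̄ = (1/s)·∑ⱼ L_j`; assume `f` is `μ`-strongly convex
and `L`-smooth with `0 < μ ≤ L`, with minimizer `x*`. With `L̃ = max{L, L̄/K}`, `σ = μ/L̃`,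
`θ₁, θ₂ ∈ (0,1)`, `θ₁ + θ₂ ≤ 1`, `p ∈ (0,1]`, `η = θ₂/((1 + θ₂)·θ₁)`,
`x = θ₁·z + θ₂·w + (1 − θ₁ − θ₂)·y`, an importance-sampled minibatch `J₁, …, J_K` of
i.i.d. indices with `P(J = j) = L_j/(s·L̄)`, the gradient estimator
`g = (1/K)·∑ₘ (L̄/L_{Jₘ})·(∇f_{Jₘ}(x) − ∇f_{Jₘ}(w)) + ∇f(w)`, and a Bernoulli(`p`) coin
`B` independent of the sampled indices, setting
`z⁺ = (1/(1 + ησ))·(ησ·x + z − (η/L̃)·g)`, `y⁺ = x + θ₁·(z⁺ − z)`, `w⁺ = y` if `B = 1`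
else `w`, `Z(v) = (L̃(1 + ησ)/(2η))·‖v − x*‖²`, `Y(v) = (1/θ₁)·(f(v) − f(x*))` and
`W(v) = (θ₂(1 + θ₁)/(pθ₁))·(f(v) − f(x*))`, one has
`E[Z(z⁺) + Y(y⁺) + W(w⁺)] ≤ (1/(1 + ησ))·Z(z) + (1 − θ₁(1 − θ₂))·Y(y)
  + (1 − pθ₁/(1 + θ₁))·W(w)`. -/
theorem dvpl_katyusha_lyapunov_contraction
    {s d K : ℕ} (hs : 0 < s) (hK : 1 ≤ K)
    (f : Fin s → EuclideanSpace ℝ (Fin d) → ℝ)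
    (Lf : Fin s → ℝ) (hLf : ∀ j, 0 < Lf j)
    (hdiff : ∀ j, Differentiable ℝ (f j))
    (hconv : ∀ j, ConvexOn ℝ Set.univ (f j))
    (hsmoothj : ∀ j, ∀ u v : EuclideanSpace ℝ (Fin d),
      f j v ≤ f j u + ⟪gradient (f j) u, v - u⟫ + Lf j / 2 * ‖v - u‖ ^ 2)
    (F : EuclideanSpace ℝ (Fin d) → ℝ)
    (hF : F = fun u => (1 / (s : ℝ)) * ∑ j, f j u)
    (Lbar : ℝ) (hLbar : Lbar = (1 / (s : ℝ)) * ∑ j, Lf j)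
    {μ L : ℝ} (hμ : 0 < μ) (hμL : μ ≤ L)
    (hstrong : ∀ u v : EuclideanSpace ℝ (Fin d),
      F v ≥ F u + ⟪gradient F u, v - u⟫ + μ / 2 * ‖v - u‖ ^ 2)
    (hsmooth : ∀ u v : EuclideanSpace ℝ (Fin d),
      F v ≤ F u + ⟪gradient F u, v - u⟫ + L / 2 * ‖v - u‖ ^ 2)
    (xstar : EuclideanSpace ℝ (Fin d)) (hmin : ∀ v, F xstar ≤ F v)
    {Ltil σ θ₁ θ₂ p η : ℝ}
    (hLtil : Ltil = max L (Lbar / (K : ℝ))) (hσ : σ = μ / Ltil)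
    (hθ₁ : θ₁ ∈ Set.Ioo (0 : ℝ) 1) (hθ₂ : θ₂ ∈ Set.Ioo (0 : ℝ) 1) (hθ : θ₁ + θ₂ ≤ 1)
    (hp : p ∈ Set.Ioc (0 : ℝ) 1)
    (hη : η = θ₂ / ((1 + θ₂) * θ₁))
    (z w y x : EuclideanSpace ℝ (Fin d))
    (hx : x = θ₁ • z + θ₂ • w + (1 - θ₁ - θ₂) • y)
    {Ω : Type*} [MeasureSpace Ω] [IsProbabilityMeasure (ℙ : Measure Ω)]
    (J : Fin K → Ω → Fin s)
    (hJmeas : ∀ m, Measurable (J m))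
    (hJindep : iIndepFun J ℙ)
    (hJlaw : ∀ m, ∀ j : Fin s,
      ℙ {ω | J m ω = j} = ENNReal.ofReal (Lf j / ((s : ℝ) * Lbar)))
    (g : Ω → EuclideanSpace ℝ (Fin d))
    (hg : ∀ ω, g ω = (1 / (K : ℝ)) •
        ∑ m : Fin K, (Lbar / Lf (J m ω)) •
          (gradient (f (J m ω)) x - gradient (f (J m ω)) w)
      + gradient F w)
    (B : Ω → Bool) (hBmeas : Measurable B)
    (hBp : ℙ {ω | B ω = true} = ENNReal.ofReal p)
    (hindep : IndepFun (fun ω => fun m => J m ω) B ℙ)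
    (zplus yplus wplus : Ω → EuclideanSpace ℝ (Fin d))
    (hzplus : ∀ ω, zplus ω = (1 / (1 + η * σ)) • ((η * σ) • x + z - (η / Ltil) • g ω))
    (hyplus : ∀ ω, yplus ω = x + θ₁ • (zplus ω - z))
    (hwplus : ∀ ω, wplus ω = if B ω = true then y else w)
    (Z Y W : EuclideanSpace ℝ (Fin d) → ℝ)
    (hZ : ∀ v, Z v = Ltil * (1 + η * σ) / (2 * η) * ‖v - xstar‖ ^ 2)
    (hY : ∀ v, Y v = (1 / θ₁) * (F v - F xstar))
    (hW : ∀ v, W v = θ₂ * (1 + θ₁) / (p * θ₁) * (F v - F xstar)) :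
    ∫ ω, (Z (zplus ω) + Y (yplus ω) + W (wplus ω)) ∂ℙ
      ≤ (1 / (1 + η * σ)) * Z z + (1 - θ₁ * (1 - θ₂)) * Y y
        + (1 - p * θ₁ / (1 + θ₁)) * W w := by
  obtain ⟨ht10, ht11⟩ := hθ₁
  obtain ⟨ht20, ht21⟩ := hθ₂
  obtain ⟨hp0, hp1⟩ := hp
  have hs' : (0:ℝ) < s := by exact_mod_cast hs
  have hK' : (0:ℝ) < K := by exact_mod_cast Nat.lt_of_lt_of_le Nat.zero_lt_one hK
  have hKne : (K:ℝ) ≠ 0 := ne_of_gt hK'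
  have hLbar0 : 0 < Lbar := by
    rw [hLbar]
    have hsum : 0 < ∑ j, Lf j :=
      Finset.sum_pos (fun j _ => hLf j) ⟨⟨0, hs⟩, Finset.mem_univ _⟩
    have hs'' : (0:ℝ) < s := by exact_mod_cast hs
    exact mul_pos (div_pos one_pos hs'') hsum
  have hL0 : 0 < L := lt_of_lt_of_le hμ hμL
  have hLt0 : 0 < Ltil := by rw [hLtil]; exact lt_of_lt_of_le hL0 (le_max_left _ _)
  have hLLt : L ≤ Ltil := by rw [hLtil]; exact le_max_left _ _
  have hLbarK : Lbar / K ≤ Ltil := by rw [hLtil]; exact le_max_right _ _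
  have hμLt : μ ≤ Ltil := hμL.trans hLLt
  subst hσ
  subst hη
  have hη0 : (0:ℝ) < θ₂ / ((1 + θ₂) * θ₁) := by positivity
  have hσ0 : (0:ℝ) < μ / Ltil := by positivity
  have hησ : (0:ℝ) < 1 + θ₂ / ((1 + θ₂) * θ₁) * (μ / Ltil) := by positivity
  -- gradient of F
  have hgradF : ∀ u, gradient F u = (1 / (s:ℝ)) • ∑ j, gradient (f j) u := by
    intro u
    have h1 : HasFDerivAt (fun u => ∑ j, f j u)
        (∑ j, (InnerProductSpace.toDual ℝ (EuclideanSpace ℝ (Fin d))) (gradient (f j) u)) u :=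
      HasFDerivAt.fun_sum (fun j _ => hasGradientAt_iff_hasFDerivAt.mp ((hdiff j) u).hasGradientAt)
    have h2 : HasFDerivAt F ((1/(s:ℝ)) •
        ∑ j, (InnerProductSpace.toDual ℝ (EuclideanSpace ℝ (Fin d))) (gradient (f j) u)) u := by
      rw [hF]; exact h1.const_mul (1/(s:ℝ))
    have h3 : HasGradientAt F ((1/(s:ℝ)) • ∑ j, gradient (f j) u) u := by
      rw [hasGradientAt_iff_hasFDerivAt, _root_.map_smul, map_sum]; exact h2
    exact h3.gradient
  set G := gradient F x with hG
  set Gw := gradient F w with hGw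
  set D := F w - F x - ⟪G, w - x⟫ with hD
  have hD0 : 0 ≤ D := by
    have h := hstrong x w
    rw [← hG] at h
    have h2 : (0:ℝ) ≤ μ / 2 * ‖w - x‖ ^ 2 := by positivity
    rw [hD]; linarith
  set Vf : Fin s → EuclideanSpace ℝ (Fin d) :=
    fun j => (Lbar / Lf j) • (gradient (f j) x - gradient (f j) w) with hVf
  set P : Fin s → ℝ := fun j => Lf j / ((s:ℝ) * Lbar) with hPdef
  have hP0 : ∀ j, 0 ≤ P j :=
    fun j => le_of_lt (div_pos (hLf j) (mul_pos hs' hLbar0))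
  have hPmeas : ∀ m j, (ℙ ((J m) ⁻¹' {j})).toReal = P j := by
    intro m j
    have hset : (J m) ⁻¹' {j} = {ω | J m ω = j} := by ext ω; simp
    rw [hset, hJlaw m j, ENNReal.toReal_ofReal (hP0 j)]
  have hLfsum : (∑ j, Lf j) = s * Lbar := by rw [hLbar]; field_simp
  have hPsum : ∑ j, P j = 1 := by
    rw [hPdef, ← Finset.sum_div, hLfsum]
    field_simp
  have hVfsum : ∑ j, P j • Vf j = G - Gw := by
    have hterm : ∀ j, P j • Vf j = (1/(s:ℝ)) • (gradient (f j) x - gradient (f j) w) := by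
      intro j
      rw [show P j = Lf j / ((s:ℝ) * Lbar) from rfl,
        show Vf j = (Lbar / Lf j) • (gradient (f j) x - gradient (f j) w) from rfl, smul_smul]
      congr 1
      have h1 : Lf j ≠ 0 := ne_of_gt (hLf j)
      have h2 : Lbar ≠ 0 := ne_of_gt hLbar0
      have h3 : (s:ℝ) ≠ 0 := ne_of_gt hs'
      field_simp
    calc ∑ j, P j • Vf j = ∑ j, (1/(s:ℝ)) • (gradient (f j) x - gradient (f j) w) :=
          Finset.sum_congr rfl (fun j _ => hterm j)
      _ = (1/(s:ℝ)) • ∑ j, (gradient (f j) x - gradient (f j) w) := by rw [Finset.smul_sum]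
      _ = G - Gw := by
          rw [hG, hGw, hgradF x, hgradF w, Finset.sum_sub_distrib, smul_sub]
  -- the sampling map
  set T : Ω → (Fin K → Fin s) := fun ω m => J m ω with hTdef
  have hTmeas : Measurable T := measurable_pi_lambda _ (fun m => hJmeas m)
  set gv : (Fin K → Fin s) → EuclideanSpace ℝ (Fin d) :=
    fun v => (1 / (K : ℝ)) • ∑ m : Fin K, Vf (v m) + Gw with hgvdef
  have hgT : ∀ ω, g ω = gv (T ω) := by
    intro ω; rw [hg]
  set zv : (Fin K → Fin s) → EuclideanSpace ℝ (Fin d) :=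
    fun v => (1 / (1 + θ₂ / ((1 + θ₂) * θ₁) * (μ / Ltil))) •
      ((θ₂ / ((1 + θ₂) * θ₁) * (μ / Ltil)) • x + z
        - (θ₂ / ((1 + θ₂) * θ₁) / Ltil) • gv v) with hzvdef
  have hzT : ∀ ω, zplus ω = zv (T ω) := by
    intro ω; rw [hzplus ω, hgT ω]
  set yv : (Fin K → Fin s) → EuclideanSpace ℝ (Fin d) :=
    fun v => x + θ₁ • (zv v - z) with hyvdef
  have hyT : ∀ ω, yplus ω = yv (T ω) := by
    intro ω; rw [hyplus ω, hzT ω]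
  -- integrabilities
  have intZY : Integrable (fun ω => Z (zplus ω) + Y (yplus ω)) ℙ := by
    have h := integrable_comp_fin T hTmeas (fun v => Z (zv v) + Y (yv v))
    exact h.congr (Filter.Eventually.of_forall (fun ω => by
      simp only [← hzT, ← hyT]))
  have intW : Integrable (fun ω => W (wplus ω)) ℙ := by
    have h := integrable_comp_fin B hBmeas (fun b => if b = true then W y else W w)
    exact h.congr (Filter.Eventually.of_forall (fun ω => by
      simp only [hwplus ω, apply_ite W]))
  -- the W part
  have hWint : ∫ ω, W (wplus ω) ∂ℙ = p * W y + (1 - p) * W w := by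
    have hcongr : ∀ ω, W (wplus ω) = (fun b => if b = true then W y else W w) (B ω) := by
      intro ω; rw [hwplus ω, apply_ite W]
    rw [integral_congr_ae (Filter.Eventually.of_forall hcongr)]
    rw [integral_comp_fin B hBmeas (fun b => if b = true then W y else W w), Fintype.sum_bool]
    have htrue : B ⁻¹' {true} = {ω | B ω = true} := by ext ω; simp
    have hfalse : B ⁻¹' {false} = {ω | B ω = true}ᶜ := by
      ext ω; simp
    have hmeasB : MeasurableSet {ω | B ω = true} := by
      rw [← htrue]; exact hBmeas (measurableSet_singleton true)
    have hcompl : ℙ {ω | B ω = true}ᶜ = 1 - ENNReal.ofReal p := by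
      rw [measure_compl hmeasB (measure_ne_top _ _), hBp, measure_univ]
    rw [htrue, hfalse, hBp, hcompl, ENNReal.toReal_ofReal hp0.le]
    have h1 : (1 - ENNReal.ofReal p).toReal = 1 - p := by
      rw [ENNReal.toReal_sub_of_le (ENNReal.ofReal_le_one.mpr hp1) ENNReal.one_ne_top,
        ENNReal.toReal_one, ENNReal.toReal_ofReal hp0.le]
    rw [h1]
    simp only [smul_eq_mul]
    norm_num
  -- expectation of Vf
  have hIVf : ∀ m, Integrable (fun ω => Vf (J m ω)) ℙ :=
    fun m => integrable_comp_fin (J m) (hJmeas m) Vf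
  have hEVf : ∀ m, ∫ ω, Vf (J m ω) ∂ℙ = G - Gw := by
    intro m
    rw [integral_comp_fin (J m) (hJmeas m) Vf]
    calc ∑ j, (ℙ ((J m) ⁻¹' {j})).toReal • Vf j = ∑ j, P j • Vf j :=
          Finset.sum_congr rfl (fun j _ => by rw [hPmeas m j])
      _ = G - Gw := hVfsum
  have hgInt : Integrable g ℙ := by
    have h := integrable_comp_fin T hTmeas gv
    exact h.congr (Filter.Eventually.of_forall (fun ω => (hgT ω).symm))
  have hEg : ∫ ω, g ω ∂ℙ = G := by
    have hfun : ∀ ω, g ω = (1/(K:ℝ)) • ∑ m : Fin K, Vf (J m ω) + Gw := fun ω => by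
      rw [hg]
    have hintsum : Integrable (fun ω => ∑ m : Fin K, Vf (J m ω)) ℙ :=
      integrable_finset_sum _ (fun m _ => hIVf m)
    have hsm : Integrable (fun ω => (1/(K:ℝ)) • ∑ m : Fin K, Vf (J m ω)) ℙ :=
      hintsum.smul ((1:ℝ)/(K:ℝ))
    rw [integral_congr_ae (Filter.Eventually.of_forall hfun),
      integral_add hsm (integrable_const Gw), integral_smul,
      integral_finset_sum _ (fun m _ => hIVf m)]
    simp only [hEVf, integral_const, probReal_univ, one_smul,
      Finset.sum_const, Finset.card_univ, Fintype.card_fin]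
    rw [← Nat.cast_smul_eq_nsmul ℝ, smul_smul]
    rw [show (1/(K:ℝ)) * (K:ℝ) = 1 by field_simp, one_smul]
    abel
  -- E1: the inner product term has mean zero
  have hE1 : ∫ ω, ⟪g ω - G, z - xstar⟫ ∂ℙ = 0 := by
    have hInt : Integrable (fun ω => g ω - G) ℙ := hgInt.sub (integrable_const G)
    have hcomm : ∀ ω, ⟪g ω - G, z - xstar⟫ = ⟪z - xstar, g ω - G⟫ :=
      fun ω => real_inner_comm _ _
    rw [integral_congr_ae (Filter.Eventually.of_forall hcomm), integral_inner hInt]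
    rw [integral_sub hgInt (integrable_const G), hEg, integral_const, probReal_univ,
      one_smul, sub_self, inner_zero_right]
  -- E2: variance bound
  set Xv : Fin s → EuclideanSpace ℝ (Fin d) := fun j => Vf j - (G - Gw) with hXvdef
  have hXsum : ∑ j, P j • Xv j = 0 := by
    have h1 : ∀ j, P j • Xv j = P j • Vf j - P j • (G - Gw) := fun j => by
      rw [show Xv j = Vf j - (G - Gw) from rfl, smul_sub]
    rw [Finset.sum_congr rfl fun j _ => h1 j, Finset.sum_sub_distrib, hVfsum,
      ← Finset.sum_smul, hPsum, one_smul, sub_self]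
  have hfun : ∀ ω, g ω = (1/(K:ℝ)) • ∑ m : Fin K, Vf (J m ω) + Gw := fun ω => by
    rw [hg]
  have hgG : ∀ ω, g ω - G = (1/(K:ℝ)) • ∑ m : Fin K, Xv (J m ω) := by
    intro ω
    rw [hfun ω]
    have : ∑ m : Fin K, Xv (J m ω)
        = ∑ m : Fin K, Vf (J m ω) - (K : ℕ) • (G - Gw) := by
      rw [Finset.sum_congr rfl (fun m _ =>
        show Xv (J m ω) = Vf (J m ω) - (G - Gw) from rfl), Finset.sum_sub_distrib,
        Finset.sum_const, Finset.card_univ, Fintype.card_fin]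
    rw [this, smul_sub, ← Nat.cast_smul_eq_nsmul ℝ, smul_smul,
      show (1/(K:ℝ)) * (K:ℝ) = 1 by field_simp, one_smul]
    abel
  have hsqq : ∀ ω, ‖g ω - G‖ ^ 2
      = (1/(K:ℝ))^2 * ∑ m : Fin K, ∑ m' : Fin K, ⟪Xv (J m ω), Xv (J m' ω)⟫ := by
    intro ω
    rw [hgG ω, norm_smul, Real.norm_eq_abs, abs_of_pos (by positivity : (0:ℝ) < 1/(K:ℝ)),
      mul_pow]
    congr 1
    rw [← real_inner_self_eq_norm_sq, sum_inner]
    exact Finset.sum_congr rfl fun m _ => inner_sum _ _ _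
  have hIpair : ∀ m m' : Fin K, Integrable (fun ω => ⟪Xv (J m ω), Xv (J m' ω)⟫) ℙ := by
    intro m m'
    have hTm : Measurable (fun ω => (J m ω, J m' ω)) := (hJmeas m).prodMk (hJmeas m')
    exact integrable_comp_fin _ hTm (fun q : Fin s × Fin s => ⟪Xv q.1, Xv q.2⟫)
  have hoff : ∀ m m' : Fin K, m ≠ m' → ∫ ω, ⟪Xv (J m ω), Xv (J m' ω)⟫ ∂ℙ = 0 := by
    intro m m' hmm
    have hTm : Measurable (fun ω => (J m ω, J m' ω)) := (hJmeas m).prodMk (hJmeas m')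
    rw [show (fun ω => ⟪Xv (J m ω), Xv (J m' ω)⟫)
        = fun ω => (fun q : Fin s × Fin s => ⟪Xv q.1, Xv q.2⟫) ((J m ω, J m' ω)) from rfl,
      integral_comp_fin _ hTm (fun q : Fin s × Fin s => ⟪Xv q.1, Xv q.2⟫)]
    have hind : IndepFun (J m) (J m') ℙ := hJindep.indepFun hmm
    have hprob : ∀ q : Fin s × Fin s,
        (ℙ ((fun ω => (J m ω, J m' ω)) ⁻¹' {q})).toReal = P q.1 * P q.2 := by
      intro q
      have hset : (fun ω => (J m ω, J m' ω)) ⁻¹' {q}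
          = (J m) ⁻¹' {q.1} ∩ (J m') ⁻¹' {q.2} := by
        ext ω; simp [Prod.ext_iff]
      rw [hset, hind.measure_inter_preimage_eq_mul {q.1} {q.2}
        (measurableSet_singleton _) (measurableSet_singleton _),
        ENNReal.toReal_mul, hPmeas m q.1, hPmeas m' q.2]
    calc ∑ q : Fin s × Fin s,
          (ℙ ((fun ω => (J m ω, J m' ω)) ⁻¹' {q})).toReal • ⟪Xv q.1, Xv q.2⟫
        = ∑ q : Fin s × Fin s, (P q.1 * P q.2) * ⟪Xv q.1, Xv q.2⟫ :=
          Finset.sum_congr rfl (fun q _ => by rw [hprob q, smul_eq_mul])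
      _ = ∑ j : Fin s, ∑ j' : Fin s, (P j * P j') * ⟪Xv j, Xv j'⟫ := by
          rw [Fintype.sum_prod_type]
      _ = ⟪∑ j, P j • Xv j, ∑ j', P j' • Xv j'⟫ := by
          rw [sum_inner]
          refine Finset.sum_congr rfl (fun j _ => ?_)
          rw [real_inner_smul_left, inner_sum, Finset.mul_sum]
          refine Finset.sum_congr rfl (fun j' _ => ?_)
          rw [real_inner_smul_right]
          ring
      _ = 0 := by rw [hXsum, inner_zero_left]
  have hdiag : ∀ m : Fin K, ∫ ω, ⟪Xv (J m ω), Xv (J m ω)⟫ ∂ℙ ≤ 2 * Lbar * D := by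
    intro m
    rw [show (fun ω => ⟪Xv (J m ω), Xv (J m ω)⟫)
        = fun ω => (fun j => ⟪Xv j, Xv j⟫) (J m ω) from rfl,
      integral_comp_fin (J m) (hJmeas m) (fun j => ⟪Xv j, Xv j⟫)]
    have hre : ∑ j, (ℙ ((J m) ⁻¹' {j})).toReal • ⟪Xv j, Xv j⟫
        = ∑ j, P j * ⟪Xv j, Xv j⟫ :=
      Finset.sum_congr rfl (fun j _ => by rw [hPmeas m j, smul_eq_mul])
    rw [hre]
    have hsum2 : ∑ j, P j * ⟪Vf j, G - Gw⟫ = ‖G - Gw‖ ^ 2 := by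
      calc ∑ j, P j * ⟪Vf j, G - Gw⟫ = ⟪∑ j, P j • Vf j, G - Gw⟫ := by
            rw [sum_inner]
            exact Finset.sum_congr rfl fun j _ => (real_inner_smul_left _ _ _).symm
        _ = ‖G - Gw‖ ^ 2 := by rw [hVfsum, real_inner_self_eq_norm_sq]
    have hexp : ∑ j, P j * ⟪Xv j, Xv j⟫ = ∑ j, P j * ‖Vf j‖ ^ 2 - ‖G - Gw‖ ^ 2 := by
      have hterm : ∀ j, P j * ⟪Xv j, Xv j⟫
          = P j * ‖Vf j‖ ^ 2 - 2 * (P j * ⟪Vf j, G - Gw⟫) + P j * ‖G - Gw‖ ^ 2 := by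
        intro j
        have hXj : ⟪Xv j, Xv j⟫ = ‖Vf j‖ ^ 2 - 2 * ⟪Vf j, G - Gw⟫ + ‖G - Gw‖ ^ 2 := by
          rw [show Xv j = Vf j - (G - Gw) from rfl, real_inner_self_eq_norm_sq,
            norm_sub_sq_real]
        rw [hXj]; ring
      rw [Finset.sum_congr rfl (fun j _ => hterm j), Finset.sum_add_distrib,
        Finset.sum_sub_distrib, ← Finset.mul_sum, ← Finset.sum_mul, hPsum, hsum2]
      ring
    have hterm2 : ∀ j, P j * ‖Vf j‖ ^ 2
        ≤ 2 * Lbar / (s:ℝ) * (f j w - f j x - ⟪gradient (f j) x, w - x⟫) := by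
      intro j
      have hco := cocoercive (hconv j) (hdiff j) (hLf j) (hsmoothj j) x w
      have hnorm : ‖Vf j‖ ^ 2
          = (Lbar / Lf j) ^ 2 * ‖gradient (f j) x - gradient (f j) w‖ ^ 2 := by
        rw [show Vf j = (Lbar / Lf j) • (gradient (f j) x - gradient (f j) w) from rfl,
          norm_smul, Real.norm_eq_abs, abs_of_pos (div_pos hLbar0 (hLf j)), mul_pow]
      have hpos : (0:ℝ) ≤ P j * (Lbar / Lf j) ^ 2 := by
        have := hP0 j; positivity
      calc P j * ‖Vf j‖ ^ 2
          = (P j * (Lbar / Lf j) ^ 2) * ‖gradient (f j) x - gradient (f j) w‖ ^ 2 := by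
            rw [hnorm]; ring
        _ ≤ (P j * (Lbar / Lf j) ^ 2)
              * (2 * Lf j * (f j w - f j x - ⟪gradient (f j) x, w - x⟫)) :=
            mul_le_mul_of_nonneg_left hco hpos
        _ = 2 * Lbar / (s:ℝ) * (f j w - f j x - ⟪gradient (f j) x, w - x⟫) := by
            rw [hPdef]
            have h1 : Lf j ≠ 0 := ne_of_gt (hLf j)
            have h2 : Lbar ≠ 0 := ne_of_gt hLbar0
            have h3 : (s:ℝ) ≠ 0 := ne_of_gt hs'
            field_simp
    have hDsum : ∑ j, (2 * Lbar / (s:ℝ)) * (f j w - f j x - ⟪gradient (f j) x, w - x⟫)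
        = 2 * Lbar * D := by
      rw [← Finset.mul_sum]
      have hFw : F w = (1/(s:ℝ)) * ∑ j, f j w := by rw [hF]
      have hFx : F x = (1/(s:ℝ)) * ∑ j, f j x := by rw [hF]
      have hGin : ⟪G, w - x⟫ = (1/(s:ℝ)) * ∑ j, ⟪gradient (f j) x, w - x⟫ := by
        rw [hG, hgradF x, real_inner_smul_left, sum_inner]
      rw [hD, hFw, hFx, hGin, Finset.sum_sub_distrib, Finset.sum_sub_distrib]
      field_simp
      try ring
    calc ∑ j, P j * ⟪Xv j, Xv j⟫ = ∑ j, P j * ‖Vf j‖ ^ 2 - ‖G - Gw‖ ^ 2 := hexp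
      _ ≤ ∑ j, P j * ‖Vf j‖ ^ 2 := by nlinarith [sq_nonneg ‖G - Gw‖]
      _ ≤ ∑ j, (2 * Lbar / (s:ℝ)) * (f j w - f j x - ⟪gradient (f j) x, w - x⟫) :=
          Finset.sum_le_sum (fun j _ => hterm2 j)
      _ = 2 * Lbar * D := hDsum
  have hE2 : ∫ ω, ‖g ω - G‖ ^ 2 ∂ℙ ≤ 2 * Ltil * D := by
    have heq : ∫ ω, ‖g ω - G‖ ^ 2 ∂ℙ
        = (1/(K:ℝ))^2 * ∑ m : Fin K, ∑ m' : Fin K, ∫ ω, ⟪Xv (J m ω), Xv (J m' ω)⟫ ∂ℙ := by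
      rw [integral_congr_ae (Filter.Eventually.of_forall hsqq), integral_const_mul]
      congr 1
      rw [integral_finset_sum _ (fun m _ => integrable_finset_sum _ (fun m' _ => hIpair m m'))]
      exact Finset.sum_congr rfl fun m _ => integral_finset_sum _ (fun m' _ => hIpair m m')
    rw [heq]
    have hrow : ∀ m : Fin K, ∑ m' : Fin K, ∫ ω, ⟪Xv (J m ω), Xv (J m' ω)⟫ ∂ℙ
        ≤ 2 * Lbar * D := by
      intro m
      rw [Finset.sum_eq_single m (fun m' _ hne => hoff m m' (Ne.symm hne))
        (fun h => absurd (Finset.mem_univ m) h)]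
      exact hdiag m
    have hsum_le : ∑ m : Fin K, ∑ m' : Fin K, ∫ ω, ⟪Xv (J m ω), Xv (J m' ω)⟫ ∂ℙ
        ≤ (K:ℝ) * (2 * Lbar * D) := by
      calc ∑ m : Fin K, ∑ m' : Fin K, ∫ ω, ⟪Xv (J m ω), Xv (J m' ω)⟫ ∂ℙ
          ≤ ∑ _m : Fin K, 2 * Lbar * D := Finset.sum_le_sum (fun m _ => hrow m)
        _ = (K:ℝ) * (2 * Lbar * D) := by
            rw [Finset.sum_const, Finset.card_univ, Fintype.card_fin, nsmul_eq_mul]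
    calc (1/(K:ℝ))^2 * ∑ m : Fin K, ∑ m' : Fin K, ∫ ω, ⟪Xv (J m ω), Xv (J m' ω)⟫ ∂ℙ
        ≤ (1/(K:ℝ))^2 * ((K:ℝ) * (2 * Lbar * D)) :=
          mul_le_mul_of_nonneg_left hsum_le (by positivity)
      _ = (Lbar / (K:ℝ)) * (2 * D) := by field_simp
      _ ≤ Ltil * (2 * D) := mul_le_mul_of_nonneg_right hLbarK (by linarith)
      _ = 2 * Ltil * D := by ring
  -- nonzero facts
  have hθ₁ne : θ₁ ≠ 0 := ne_of_gt ht10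
  have hθ₂ne : θ₂ ≠ 0 := ne_of_gt ht20
  have hLtne : Ltil ≠ 0 := ne_of_gt hLt0
  have h1θ₂ne : (1:ℝ) + θ₂ ≠ 0 := by positivity
  have h1θ₁ne : (1:ℝ) + θ₁ ≠ 0 := by positivity
  have hpne : p ≠ 0 := ne_of_gt hp0
  have hησne : 1 + θ₂ / ((1 + θ₂) * θ₁) * (μ / Ltil) ≠ 0 := ne_of_gt hησ
  -- the deterministic per-ω inequality
  have hK1ω : ∀ ω, θ₂ • g ω + (Ltil * (1 + θ₂) * θ₁) • (zplus ω - z)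
      + (θ₂ * μ) • (zplus ω - x) = 0 := by
    intro ω
    rw [hzplus ω]
    match_scalars
    · field_simp
      ring
    · field_simp
      ring
    · field_simp
      ring
  have hyx : ∀ ω, yplus ω - x = θ₁ • (zplus ω - z) := fun ω => by rw [hyplus ω]; abel
  have h2ω : ∀ ω, F (yplus ω) ≤ F x + θ₁ * ⟪G, zplus ω - z⟫
      + Ltil * θ₁ ^ 2 / 2 * ‖zplus ω - z‖ ^ 2 := by
    intro ω
    have h := hsmooth x (yplus ω)
    rw [← hG, hyx ω, real_inner_smul_right, norm_smul, Real.norm_eq_abs,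
      abs_of_pos ht10] at h
    have h2 : L / 2 * (θ₁ * ‖zplus ω - z‖) ^ 2
        ≤ Ltil * θ₁ ^ 2 / 2 * ‖zplus ω - z‖ ^ 2 := by
      nlinarith [mul_nonneg (mul_nonneg (sub_nonneg.mpr hLLt) (sq_nonneg θ₁))
        (sq_nonneg ‖zplus ω - z‖)]
    rw [mul_pow] at h2
    linarith
  have h5x : F x + ⟪G, xstar - x⟫ + μ / 2 * ‖xstar - x‖ ^ 2 ≤ F xstar := by
    have h := hstrong x xstar
    rw [← hG] at h
    linarith
  have h6x : F x + ⟪G, y - x⟫ ≤ F y := by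
    have h := hstrong x y
    rw [← hG] at h
    have hnn : (0:ℝ) ≤ μ / 2 * ‖y - x‖ ^ 2 := by positivity
    linarith
  have hpt : ∀ ω,
      θ₁ * Ltil * (Ltil * (1 + θ₂) * θ₁ + μ * θ₂) * ‖zplus ω - xstar‖ ^ 2
        + 2 * θ₂ * Ltil * (F (yplus ω) - F xstar)
      ≤ (Ltil ^ 2 * (1 + θ₂) * θ₁ ^ 2 * ‖z - xstar‖ ^ 2
          + 2 * θ₂ * Ltil * (1 - θ₁ - θ₂) * (F y - F xstar)
          + 2 * θ₂ ^ 2 * Ltil * (F w - F xstar) - 2 * θ₂ ^ 2 * Ltil * D)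
        - 2 * θ₁ * θ₂ * Ltil * ⟪g ω - G, z - xstar⟫ + θ₂ ^ 2 * ‖G - g ω‖ ^ 2 := by
    intro ω
    have h := katyusha_pointwise ht10 ht20 hθ hμ hLt0 x z y w xstar (zplus ω) G (g ω)
      hx (hK1ω ω) (F x) (F y) (F w) (F xstar) (F (yplus ω)) (h2ω ω) h5x h6x
    rw [← hD] at h
    linarith
  -- integrate the pointwise inequality
  have hIinner : Integrable (fun ω => ⟪g ω - G, z - xstar⟫) ℙ := by
    have h := integrable_comp_fin T hTmeas (fun v => ⟪gv v - G, z - xstar⟫)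
    exact h.congr (Filter.Eventually.of_forall fun ω => by simp only [← hgT])
  have hInorm : Integrable (fun ω => ‖G - g ω‖ ^ 2) ℙ := by
    have h := integrable_comp_fin T hTmeas (fun v => ‖G - gv v‖ ^ 2)
    exact h.congr (Filter.Eventually.of_forall fun ω => by simp only [← hgT])
  have hIL : Integrable (fun ω =>
      θ₁ * Ltil * (Ltil * (1 + θ₂) * θ₁ + μ * θ₂) * ‖zplus ω - xstar‖ ^ 2
        + 2 * θ₂ * Ltil * (F (yplus ω) - F xstar)) ℙ := by
    have h := integrable_comp_fin T hTmeas (fun v =>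
      θ₁ * Ltil * (Ltil * (1 + θ₂) * θ₁ + μ * θ₂) * ‖zv v - xstar‖ ^ 2
        + 2 * θ₂ * Ltil * (F (yv v) - F xstar))
    exact h.congr (Filter.Eventually.of_forall fun ω => by simp only [← hzT, ← hyT])
  have hIR : Integrable (fun ω =>
      (Ltil ^ 2 * (1 + θ₂) * θ₁ ^ 2 * ‖z - xstar‖ ^ 2
          + 2 * θ₂ * Ltil * (1 - θ₁ - θ₂) * (F y - F xstar)
          + 2 * θ₂ ^ 2 * Ltil * (F w - F xstar) - 2 * θ₂ ^ 2 * Ltil * D)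
        - 2 * θ₁ * θ₂ * Ltil * ⟪g ω - G, z - xstar⟫ + θ₂ ^ 2 * ‖G - g ω‖ ^ 2) ℙ :=
    (((integrable_const _).sub (hIinner.const_mul _)).add (hInorm.const_mul _))
  have hmono := integral_mono hIL hIR hpt
  have hRHSle : ∫ ω, ((Ltil ^ 2 * (1 + θ₂) * θ₁ ^ 2 * ‖z - xstar‖ ^ 2
          + 2 * θ₂ * Ltil * (1 - θ₁ - θ₂) * (F y - F xstar)
          + 2 * θ₂ ^ 2 * Ltil * (F w - F xstar) - 2 * θ₂ ^ 2 * Ltil * D)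
        - 2 * θ₁ * θ₂ * Ltil * ⟪g ω - G, z - xstar⟫ + θ₂ ^ 2 * ‖G - g ω‖ ^ 2) ∂ℙ
      ≤ Ltil ^ 2 * (1 + θ₂) * θ₁ ^ 2 * ‖z - xstar‖ ^ 2
          + 2 * θ₂ * Ltil * (1 - θ₁ - θ₂) * (F y - F xstar)
          + 2 * θ₂ ^ 2 * Ltil * (F w - F xstar) := by
    have hA : Integrable (fun ω =>
        (Ltil ^ 2 * (1 + θ₂) * θ₁ ^ 2 * ‖z - xstar‖ ^ 2
          + 2 * θ₂ * Ltil * (1 - θ₁ - θ₂) * (F y - F xstar)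
          + 2 * θ₂ ^ 2 * Ltil * (F w - F xstar) - 2 * θ₂ ^ 2 * Ltil * D)
        - 2 * θ₁ * θ₂ * Ltil * ⟪g ω - G, z - xstar⟫) ℙ :=
      (integrable_const _).sub (hIinner.const_mul _)
    have hB : Integrable (fun ω => θ₂ ^ 2 * ‖G - g ω‖ ^ 2) ℙ := hInorm.const_mul _
    have hC : Integrable (fun ω => 2 * θ₁ * θ₂ * Ltil * ⟪g ω - G, z - xstar⟫) ℙ :=
      hIinner.const_mul _
    rw [integral_add hA hB, integral_sub (integrable_const _) hC, integral_const,
      integral_const_mul, hE1, mul_zero, sub_zero, integral_const_mul]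
    have hnormflip : ∫ ω, ‖G - g ω‖ ^ 2 ∂ℙ = ∫ ω, ‖g ω - G‖ ^ 2 ∂ℙ :=
      integral_congr_ae (Filter.Eventually.of_forall fun ω => by simp only [norm_sub_rev G])
    rw [hnormflip]
    have hb : θ₂ ^ 2 * ∫ ω, ‖g ω - G‖ ^ 2 ∂ℙ ≤ θ₂ ^ 2 * (2 * Ltil * D) :=
      mul_le_mul_of_nonneg_left hE2 (by positivity)
    simp only [probReal_univ, smul_eq_mul, one_mul]
    nlinarith [hb]
  have hLHSeq : ∫ ω, (θ₁ * Ltil * (Ltil * (1 + θ₂) * θ₁ + μ * θ₂) * ‖zplus ω - xstar‖ ^ 2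
        + 2 * θ₂ * Ltil * (F (yplus ω) - F xstar)) ∂ℙ
      = 2 * θ₁ * θ₂ * Ltil * ∫ ω, (Z (zplus ω) + Y (yplus ω)) ∂ℙ := by
    rw [← integral_const_mul]
    refine integral_congr_ae (Filter.Eventually.of_forall fun ω => ?_)
    beta_reduce
    rw [hZ, hY]
    field_simp
  have hkey2 : 2 * θ₁ * θ₂ * Ltil * ∫ ω, (Z (zplus ω) + Y (yplus ω)) ∂ℙ
      ≤ 2 * θ₁ * θ₂ * Ltil * ((1 / (1 + θ₂ / ((1 + θ₂) * θ₁) * (μ / Ltil))) * Z z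
        + ((1 - θ₁ - θ₂) / θ₁) * (F y - F xstar) + (θ₂ / θ₁) * (F w - F xstar)) := by
    rw [← hLHSeq]
    refine hmono.trans (hRHSle.trans (le_of_eq ?_))
    rw [hZ]
    field_simp
  have hZY_le : ∫ ω, (Z (zplus ω) + Y (yplus ω)) ∂ℙ
      ≤ (1 / (1 + θ₂ / ((1 + θ₂) * θ₁) * (μ / Ltil))) * Z z
        + ((1 - θ₁ - θ₂) / θ₁) * (F y - F xstar) + (θ₂ / θ₁) * (F w - F xstar) :=
    le_of_mul_le_mul_left (by linarith [hkey2]) (by positivity : (0:ℝ) < 2 * θ₁ * θ₂ * Ltil)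
  rw [integral_add intZY intW, hWint]
  have hfinal : ((1 / (1 + θ₂ / ((1 + θ₂) * θ₁) * (μ / Ltil))) * Z z
        + ((1 - θ₁ - θ₂) / θ₁) * (F y - F xstar) + (θ₂ / θ₁) * (F w - F xstar))
        + (p * W y + (1 - p) * W w)
      = (1 / (1 + θ₂ / ((1 + θ₂) * θ₁) * (μ / Ltil))) * Z z
        + (1 - θ₁ * (1 - θ₂)) * Y y + (1 - p * θ₁ / (1 + θ₁)) * W w := by
    rw [hY y, hW y, hW w]
    field_simp
    ring
  linarith [hZY_le]
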